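/- Let 0 ≤ m < 1, t₀ > 0 and K > 0 be fixed, let 0 < α < 1, and let f : (0,∞) → (0,∞) be continuous with ∫₀¹ f(r) r^{1−α} dr < ∞. Define, for h > 0, B(h) = ∫₀^{2 sqrt((1+m)/(1−m)) t₀} ∫_{r sqrt(1−m²)}^{2(1+m)t₀} ∫₀^{π/2} 1_{η(θ) ≤ w/((1−m²) r)} · r f(r) ln(1 + K h^{1/2} / (w r η(θ)/(1−m²) − r² η(θ)²)) (ln(4(1+m)t₀) − ln w) dθ dw dr. Then for every b ∈ (0, α) there exists a constant C > 0 such that B(h) ≤ C h^{b/2} for all h ∈ (0, 1). -/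

import Mathlib

open MeasureTheory Set
open scoped ENNReal NNReal

/-- `η(θ) = sqrt(cos²θ/(1−m²)² + sin²θ/(1−m²))`. -/
noncomputable def eta (m θ : ℝ) : ℝ :=
  Real.sqrt (Real.cos θ ^ 2 / (1 - m ^ 2) ^ 2 + Real.sin θ ^ 2 / (1 - m ^ 2))

/-- The modulus-of-continuity bound of Lemma 5 of the paper:
`B(h) = ∫₀^{2√((1+m)/(1−m))t₀} ∫_{r√(1−m²)}^{2(1+m)t₀} ∫₀^{π/2} 1_{η(θ) ≤ w/((1−m²)r)}
  r f(r) ln(1 + K h^{1/2}/(w r η(θ)/(1−m²) − r² η(θ)²)) (ln(4(1+m)t₀) − ln w) dθ dw dr`. -/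
noncomputable def B (m t₀ K : ℝ) (f : ℝ → ℝ) (h : ℝ) : ENNReal :=
  ∫⁻ r in Ioo (0 : ℝ) (2 * Real.sqrt ((1 + m) / (1 - m)) * t₀),
    ∫⁻ w in Ioo (r * Real.sqrt (1 - m ^ 2)) (2 * (1 + m) * t₀),
      ∫⁻ θ in Ioo (0 : ℝ) (Real.pi / 2),
        ENNReal.ofReal
          (if eta m θ ≤ w / ((1 - m ^ 2) * r) then
            r * f r *
              Real.log (1 + K * Real.sqrt h /
                (w * r * eta m θ / (1 - m ^ 2) - r ^ 2 * eta m θ ^ 2)) *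
              (Real.log (4 * (1 + m) * t₀) - Real.log w)
          else 0)

lemma aux_add_rpow {b : ℝ} (hb0 : 0 < b) (hb1 : b ≤ 1) {x y : ℝ} (hx : 0 ≤ x) (hy : 0 ≤ y) :
    (x + y) ^ b ≤ x ^ b + y ^ b := by
  have h3 : ((x.toNNReal + y.toNNReal) ^ b : NNReal) ≤ x.toNNReal ^ b + y.toNNReal ^ b :=
    NNReal.rpow_add_le_add_rpow x.toNNReal y.toNNReal hb0.le hb1
  have h4 := NNReal.coe_le_coe.2 h3
  push_cast [NNReal.coe_rpow, Real.coe_toNNReal x hx, Real.coe_toNNReal y hy,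
    Real.coe_toNNReal _ (add_nonneg hx hy)] at h4
  exact h4

lemma aux_log_le_rpow {ε x : ℝ} (hε : 0 < ε) (hx : 0 < x) : Real.log x ≤ x ^ ε / ε := by
  have h1 : Real.log x = Real.log (x ^ ε) / ε := by
    rw [Real.log_rpow hx]; field_simp
  rw [h1, div_le_div_iff_of_pos_right hε]
  calc Real.log (x ^ ε) ≤ x ^ ε - 1 := Real.log_le_sub_one_of_pos (Real.rpow_pos_of_pos hx ε)
    _ ≤ x ^ ε := by linarith

lemma aux_log_one_add_le {b x : ℝ} (hb0 : 0 < b) (hb1 : b ≤ 1) (hx : 0 ≤ x) :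
    Real.log (1 + x) ≤ x ^ b / b := by
  have h1 : (0:ℝ) < 1 + x := by linarith
  have h2 : Real.log (1 + x) = Real.log ((1 + x) ^ b) / b := by
    rw [Real.log_rpow h1]; field_simp
  rw [h2, div_le_div_iff_of_pos_right hb0]
  have h4 : (1 + x) ^ b ≤ 1 ^ b + x ^ b := aux_add_rpow hb0 hb1 zero_le_one hx
  rw [Real.one_rpow] at h4
  calc Real.log ((1 + x) ^ b) ≤ (1 + x) ^ b - 1 :=
        Real.log_le_sub_one_of_pos (Real.rpow_pos_of_pos h1 b)
    _ ≤ x ^ b := by linarith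

lemma eta_one_le {m : ℝ} (hm0 : 0 ≤ m) (hm1 : m < 1) (θ : ℝ) : 1 ≤ eta m θ := by
  have hd : 0 < 1 - m ^ 2 := by nlinarith
  have hc : Real.cos θ ^ 2 ≤ Real.cos θ ^ 2 / (1 - m ^ 2) ^ 2 := by
    rw [le_div_iff₀ (by positivity)]
    nlinarith [sq_nonneg (Real.cos θ), sq_nonneg m, sq_nonneg (m * Real.cos θ)]
  have hs : Real.sin θ ^ 2 ≤ Real.sin θ ^ 2 / (1 - m ^ 2) := by
    rw [le_div_iff₀ hd]
    nlinarith [sq_nonneg (Real.sin θ), sq_nonneg (m * Real.sin θ)]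
  have h2 : (1:ℝ) ≤ Real.cos θ ^ 2 / (1 - m ^ 2) ^ 2 + Real.sin θ ^ 2 / (1 - m ^ 2) := by
    have := Real.sin_sq_add_cos_sq θ; linarith
  calc (1:ℝ) = Real.sqrt 1 := Real.sqrt_one.symm
    _ ≤ eta m θ := Real.sqrt_le_sqrt h2

lemma continuous_eta (m : ℝ) : Continuous (eta m) := by
  unfold eta; fun_prop

lemma my_setLIntegral_mono {s : Set ℝ} (hs : MeasurableSet s) {f g : ℝ → ℝ≥0∞}
    (h : ∀ x ∈ s, f x ≤ g x) : (∫⁻ x in s, f x) ≤ ∫⁻ x in s, g x :=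
  lintegral_mono_ae ((ae_restrict_iff' hs).2 (Filter.Eventually.of_forall h))


set_option maxHeartbeats 2000000 in
/-- deterministic core of Theorem 2 of the paper: Let `0 ≤ m < 1`,
`t₀ > 0`, `K > 0`, `0 < α < 1`, and let `f : (0,∞) → (0,∞)` be continuous with
`∫₀¹ f(r) r^{1−α} dr < ∞`. Then for every `b ∈ (0, α)` there is `C > 0` with
`B(h) ≤ C h^{b/2}` for all `h ∈ (0,1)`. -/
theorem stmt_19 (m t₀ K α : ℝ) (hm0 : 0 ≤ m) (hm1 : m < 1) (ht₀ : 0 < t₀) (hK : 0 < K)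
    (hα0 : 0 < α) (hα1 : α < 1)
    (f : ℝ → ℝ) (hf_cont : ContinuousOn f (Ioi 0)) (hf_pos : ∀ r > (0 : ℝ), 0 < f r)
    (hf_int : (∫⁻ r in Ioo (0 : ℝ) 1, ENNReal.ofReal (f r * r ^ (1 - α))) < ⊤) :
    ∀ b ∈ Ioo (0 : ℝ) α, ∃ C > (0 : ℝ), ∀ h ∈ Ioo (0 : ℝ) 1,
      B m t₀ K f h ≤ ENNReal.ofReal (C * h ^ (b / 2)) := by
  intro b hb
  obtain ⟨hb0, hbα⟩ := hb
  have hb1 : b < 1 := hbα.trans hα1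
  have hd : 0 < 1 - m ^ 2 := by nlinarith
  have h1m : (0:ℝ) < 1 + m := by linarith
  set W : ℝ := 2 * (1 + m) * t₀ with hW_def
  have hW : 0 < W := by positivity
  set R : ℝ := 2 * Real.sqrt ((1 + m) / (1 - m)) * t₀ with hR_def
  set Φ : ℝ → ℝ≥0∞ := fun v =>
    if 0 < v then ENNReal.ofReal (Real.exp (-b * Real.log v) * Real.log (2 * W / v)) else 0
    with hΦ_def
  have hΦ_pos : ∀ v : ℝ, 0 < v → Φ v = ENNReal.ofReal (v ^ (-b) * Real.log (2 * W / v)) := by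
    intro v hv
    rw [hΦ_def]
    simp only [if_pos hv]
    rw [Real.rpow_def_of_pos hv]
    ring_nf
  have hΦ_meas : Measurable Φ := by
    apply Measurable.ite
    · exact measurableSet_lt measurable_const measurable_id
    · exact ENNReal.measurable_ofReal.comp
        (((Real.measurable_log.const_mul (-b)).exp).mul
          (Real.measurable_log.comp (measurable_const.div measurable_id)))
    · exact measurable_const
  set C₁ : ℝ≥0∞ := ∫⁻ v in Ioo (0:ℝ) W, ENNReal.ofReal (v ^ (-b) * Real.log (2 * W / v))
    with hC₁_def
  have hC₁_top : C₁ ≠ ⊤ := by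
    set ε : ℝ := (1 - b) / 2 with hε_def
    have hε : 0 < ε := by rw [hε_def]; linarith
    have hint : IntegrableOn (fun v : ℝ => (2 * W) ^ ε / ε * v ^ (-(b + ε))) (Ioo 0 W) := by
      apply Integrable.const_mul
      have hexp : (-1 : ℝ) < -(b + ε) := by rw [hε_def]; linarith
      exact (intervalIntegrable_iff_integrableOn_Ioo_of_le hW.le).mp
        (intervalIntegral.intervalIntegrable_rpow' hexp)
    refine ne_top_of_le_ne_top hint.setLIntegral_lt_top.ne
      (my_setLIntegral_mono measurableSet_Ioo ?_)
    intro v hv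
    apply ENNReal.ofReal_le_ofReal
    have hv0 : 0 < v := hv.1
    have h2Wv : (0:ℝ) < 2 * W / v := by positivity
    have hlog : Real.log (2 * W / v) ≤ (2 * W / v) ^ ε / ε := aux_log_le_rpow hε h2Wv
    have h5 : v ^ (-b) * Real.log (2 * W / v) ≤ v ^ (-b) * ((2 * W / v) ^ ε / ε) :=
      mul_le_mul_of_nonneg_left hlog (Real.rpow_nonneg hv0.le _)
    refine h5.trans (le_of_eq ?_)
    have hvb : v ^ (-b) ≠ 0 := (Real.rpow_pos_of_pos hv0 _).ne'
    have hvε : v ^ ε ≠ 0 := (Real.rpow_pos_of_pos hv0 _).ne'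
    rw [Real.div_rpow (by positivity) hv0.le,
      show -(b + ε) = -b + -ε by ring, Real.rpow_add hv0, Real.rpow_neg hv0.le ε]
    field_simp
  set C₂ : ℝ≥0∞ := ∫⁻ r in Ioo (0:ℝ) R, ENNReal.ofReal (r ^ (1 - b) * f r) with hC₂_def
  have hC₂_top : C₂ ≠ ⊤ := by
    set Mx : ℝ := max 1 R with hMx_def
    have hMx1 : (1:ℝ) ≤ Mx := le_max_left _ _
    obtain ⟨Cf, hCf⟩ := (isCompact_Icc (a := (1:ℝ)) (b := Mx)).exists_bound_of_continuousOn
      (hf_cont.mono (fun x hx => lt_of_lt_of_le one_pos hx.1))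
    have hsub : Ioo (0:ℝ) R ⊆ Ioo 0 1 ∪ Icc 1 Mx := by
      intro x hx
      rcases lt_or_ge x 1 with h1 | h1
      · exact Or.inl ⟨hx.1, h1⟩
      · exact Or.inr ⟨h1, le_max_of_le_right hx.2.le⟩
    have h1 : (∫⁻ r in Ioo (0:ℝ) 1, ENNReal.ofReal (r ^ (1 - b) * f r)) ≠ ⊤ := by
      refine ne_top_of_le_ne_top hf_int.ne (my_setLIntegral_mono measurableSet_Ioo ?_)
      intro r hr
      apply ENNReal.ofReal_le_ofReal
      calc r ^ (1 - b) * f r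
          ≤ r ^ (1 - α) * f r :=
            mul_le_mul_of_nonneg_right
              (Real.rpow_le_rpow_of_exponent_ge hr.1 hr.2.le (by linarith))
              (hf_pos r hr.1).le
        _ = f r * r ^ (1 - α) := mul_comm _ _
    have h2 : (∫⁻ r in Icc (1:ℝ) Mx, ENNReal.ofReal (r ^ (1 - b) * f r)) ≠ ⊤ := by
      have hbound : ∀ r ∈ Icc (1:ℝ) Mx,
          ENNReal.ofReal (r ^ (1 - b) * f r) ≤ ENNReal.ofReal (Mx * Cf) := by
        intro r hr
        apply ENNReal.ofReal_le_ofReal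
        have hr0 : (0:ℝ) < r := lt_of_lt_of_le one_pos hr.1
        have h3 : r ^ (1 - b) ≤ Mx := by
          calc r ^ (1 - b) ≤ Mx ^ (1 - b) :=
                Real.rpow_le_rpow hr0.le hr.2 (by linarith)
            _ ≤ Mx ^ (1:ℝ) := Real.rpow_le_rpow_of_exponent_le hMx1 (by linarith)
            _ = Mx := Real.rpow_one Mx
        have h4 : f r ≤ Cf := (le_abs_self _).trans (by simpa using hCf r hr)
        exact mul_le_mul h3 h4 (hf_pos r hr0).le (by linarith)
      refine ne_top_of_le_ne_top ?_ (my_setLIntegral_mono measurableSet_Icc hbound)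
      rw [setLIntegral_const]
      exact ENNReal.mul_ne_top ENNReal.ofReal_ne_top
        (by rw [Real.volume_Icc]; exact ENNReal.ofReal_ne_top)
    refine ne_top_of_le_ne_top ?_ ((lintegral_mono_set hsub).trans (lintegral_union_le _ _ _))
    simp [ENNReal.add_eq_top, h1, h2]
  set c₀ : ℝ := K ^ b / b * (1 - m ^ 2) ^ b with hc₀_def
  have hc₀0 : 0 ≤ c₀ := by rw [hc₀_def]; positivity
  set M : ℝ≥0∞ := ENNReal.ofReal c₀ * (C₁ * ENNReal.ofReal (Real.pi / 2)) * C₂ with hM_def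
  have hM_top : M ≠ ⊤ :=
    ENNReal.mul_ne_top (ENNReal.mul_ne_top ENNReal.ofReal_ne_top
      (ENNReal.mul_ne_top hC₁_top ENNReal.ofReal_ne_top)) hC₂_top
  refine ⟨M.toReal + 1, by positivity, ?_⟩
  intro h hh
  obtain ⟨hh0, hh1⟩ := hh
  have key : ∀ r ∈ Ioo (0:ℝ) R, ∀ w ∈ Ioo (r * Real.sqrt (1 - m ^ 2)) W, ∀ θ : ℝ,
      ENNReal.ofReal
          (if eta m θ ≤ w / ((1 - m ^ 2) * r) then
            r * f r *
              Real.log (1 + K * Real.sqrt h /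
                (w * r * eta m θ / (1 - m ^ 2) - r ^ 2 * eta m θ ^ 2)) *
              (Real.log (4 * (1 + m) * t₀) - Real.log w)
          else 0)
        ≤ ENNReal.ofReal (h ^ (b / 2) * c₀ * (r ^ (1 - b) * f r)) *
            Φ (w - (1 - m ^ 2) * r * eta m θ) := by
    intro r hr w hw θ
    have hr0 : 0 < r := hr.1
    have hfr : 0 < f r := hf_pos r hr0
    have he1 : 1 ≤ eta m θ := eta_one_le hm0 hm1 θ
    have he0 : 0 < eta m θ := lt_of_lt_of_le one_pos he1
    have hw0 : 0 < w := lt_of_le_of_lt (by positivity) hw.1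
    have hwW : w < W := hw.2
    by_cases hcond : eta m θ ≤ w / ((1 - m ^ 2) * r)
    swap
    · rw [if_neg hcond]
      simp
    rw [if_pos hcond]
    have hw₁ : (1 - m ^ 2) * r * eta m θ ≤ w := by
      rw [le_div_iff₀ (by positivity)] at hcond
      calc (1 - m ^ 2) * r * eta m θ = eta m θ * ((1 - m ^ 2) * r) := by ring
        _ ≤ w := hcond
    rcases eq_or_lt_of_le hw₁ with hveq | hvlt
    · have hden : w * r * eta m θ / (1 - m ^ 2) - r ^ 2 * eta m θ ^ 2 = 0 := by
        rw [← hveq]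
        field_simp
        ring
      rw [hden, div_zero, add_zero, Real.log_one, mul_zero, zero_mul]
      simp
    · set e := eta m θ with he_def
      set v : ℝ := w - (1 - m ^ 2) * r * e with hv_def
      have hv0 : 0 < v := by rw [hv_def]; linarith
      have hvw : v ≤ w := by
        rw [hv_def]
        nlinarith [mul_nonneg (mul_nonneg hd.le hr0.le) he0.le]
      have hden : w * r * e / (1 - m ^ 2) - r ^ 2 * e ^ 2 = r * e * v / (1 - m ^ 2) := by
        rw [hv_def]
        field_simp
      rw [hden]
      have hD0 : 0 < r * e * v / (1 - m ^ 2) := by positivity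
      have hL1 : Real.log (1 + K * Real.sqrt h / (r * e * v / (1 - m ^ 2)))
          ≤ K ^ b / b * h ^ (b / 2) * (1 - m ^ 2) ^ b * r ^ (-b) * v ^ (-b) := by
        have step1 := aux_log_one_add_le hb0 hb1.le
          (x := K * Real.sqrt h / (r * e * v / (1 - m ^ 2))) (by positivity)
        refine step1.trans ?_
        have hbase : K * Real.sqrt h / (r * e * v / (1 - m ^ 2))
            ≤ K * Real.sqrt h / (r * v / (1 - m ^ 2)) := by
          gcongr <;> first
            | positivity
            | nlinarith [hr0.le, hv0.le, he1]
        have hpow : (K * Real.sqrt h / (r * e * v / (1 - m ^ 2))) ^ b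
            ≤ (K * Real.sqrt h / (r * v / (1 - m ^ 2))) ^ b :=
          Real.rpow_le_rpow (by positivity) hbase hb0.le
        have heq : (K * Real.sqrt h / (r * v / (1 - m ^ 2))) ^ b
            = K ^ b * h ^ (b / 2) * (1 - m ^ 2) ^ b * r ^ (-b) * v ^ (-b) := by
          rw [Real.div_rpow (by positivity) (by positivity),
            Real.mul_rpow hK.le (Real.sqrt_nonneg h),
            Real.div_rpow (by positivity) hd.le,
            Real.mul_rpow hr0.le hv0.le,
            Real.sqrt_eq_rpow, ← Real.rpow_mul hh0.le,
            Real.rpow_neg hr0.le, Real.rpow_neg hv0.le,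
            show (1 / 2 : ℝ) * b = b / 2 by ring]
          have hrb : r ^ b ≠ 0 := (Real.rpow_pos_of_pos hr0 _).ne'
          have hvb : v ^ b ≠ 0 := (Real.rpow_pos_of_pos hv0 _).ne'
          have hdb : (1 - m ^ 2) ^ b ≠ 0 := (Real.rpow_pos_of_pos hd _).ne'
          field_simp
          all_goals ring
        calc (K * Real.sqrt h / (r * e * v / (1 - m ^ 2))) ^ b / b
            ≤ (K * Real.sqrt h / (r * v / (1 - m ^ 2))) ^ b / b :=
              (div_le_div_iff_of_pos_right hb0).2 hpow
          _ = K ^ b / b * h ^ (b / 2) * (1 - m ^ 2) ^ b * r ^ (-b) * v ^ (-b) := by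
              rw [heq]; ring
      have h2W : Real.log (4 * (1 + m) * t₀) = Real.log (2 * W) := by
        rw [hW_def]; ring_nf
      have hL2 : Real.log (4 * (1 + m) * t₀) - Real.log w ≤ Real.log (2 * W / v) := by
        rw [h2W, Real.log_div (by positivity) hv0.ne']
        have := Real.log_le_log hv0 hvw
        linarith
      have hL2_0 : 0 ≤ Real.log (4 * (1 + m) * t₀) - Real.log w := by
        rw [h2W]
        have := Real.log_le_log hw0 (by linarith : w ≤ 2 * W)
        linarith
      have hL1_0 : 0 ≤ Real.log (1 + K * Real.sqrt h / (r * e * v / (1 - m ^ 2))) := by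
        apply Real.log_nonneg
        have : 0 ≤ K * Real.sqrt h / (r * e * v / (1 - m ^ 2)) := by positivity
        linarith
      have hX0 : 0 ≤ K ^ b / b * h ^ (b / 2) * (1 - m ^ 2) ^ b * r ^ (-b) * v ^ (-b) := by
        positivity
      have hprod : r * f r * Real.log (1 + K * Real.sqrt h / (r * e * v / (1 - m ^ 2))) *
            (Real.log (4 * (1 + m) * t₀) - Real.log w)
          ≤ (h ^ (b / 2) * c₀ * (r ^ (1 - b) * f r)) * (v ^ (-b) * Real.log (2 * W / v)) := by
        have step : r * f r * Real.log (1 + K * Real.sqrt h / (r * e * v / (1 - m ^ 2))) *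
              (Real.log (4 * (1 + m) * t₀) - Real.log w)
            ≤ (r * f r * (K ^ b / b * h ^ (b / 2) * (1 - m ^ 2) ^ b * r ^ (-b) * v ^ (-b))) *
                Real.log (2 * W / v) := by
          apply mul_le_mul
            (mul_le_mul_of_nonneg_left hL1 (by positivity)) hL2 hL2_0 (by positivity)
        refine step.trans (le_of_eq ?_)
        rw [hc₀_def, show (1:ℝ) - b = 1 + -b by ring, Real.rpow_add hr0, Real.rpow_one]
        ring
      calc ENNReal.ofReal (r * f r *
              Real.log (1 + K * Real.sqrt h / (r * e * v / (1 - m ^ 2))) *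
              (Real.log (4 * (1 + m) * t₀) - Real.log w))
          ≤ ENNReal.ofReal ((h ^ (b / 2) * c₀ * (r ^ (1 - b) * f r)) *
              (v ^ (-b) * Real.log (2 * W / v))) := ENNReal.ofReal_le_ofReal hprod
        _ = ENNReal.ofReal (h ^ (b / 2) * c₀ * (r ^ (1 - b) * f r)) *
              ENNReal.ofReal (v ^ (-b) * Real.log (2 * W / v)) :=
            ENNReal.ofReal_mul
              (mul_nonneg (mul_nonneg (Real.rpow_nonneg hh0.le _) hc₀0) (by positivity))
        _ = _ := by rw [hΦ_pos v hv0]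
  have swap_bound : ∀ r ∈ Ioo (0:ℝ) R,
      (∫⁻ w in Ioo (r * Real.sqrt (1 - m ^ 2)) W, ∫⁻ θ in Ioo (0:ℝ) (Real.pi / 2),
        Φ (w - (1 - m ^ 2) * r * eta m θ)) ≤ C₁ * ENNReal.ofReal (Real.pi / 2) := by
    intro r hr
    have hr0 : 0 < r := hr.1
    have hmeas : AEMeasurable
        (Function.uncurry fun w θ : ℝ => Φ (w - (1 - m ^ 2) * r * eta m θ))
        ((volume.restrict (Ioo (r * Real.sqrt (1 - m ^ 2)) W)).prod
          (volume.restrict (Ioo (0:ℝ) (Real.pi / 2)))) := by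
      apply Measurable.aemeasurable
      exact hΦ_meas.comp
        (measurable_fst.sub (((continuous_eta m).measurable.comp measurable_snd).const_mul _))
    rw [lintegral_lintegral_swap hmeas]
    have hwb : ∀ θ ∈ Ioo (0:ℝ) (Real.pi / 2),
        (∫⁻ w in Ioo (r * Real.sqrt (1 - m ^ 2)) W, Φ (w - (1 - m ^ 2) * r * eta m θ)) ≤ C₁ := by
      intro θ _
      set w₁ : ℝ := (1 - m ^ 2) * r * eta m θ with hw₁_def
      have hw₁0 : 0 ≤ w₁ := by
        rw [hw₁_def]
        exact mul_nonneg (mul_nonneg hd.le hr0.le) (Real.sqrt_nonneg _)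
      set F : ℝ → ℝ≥0∞ :=
        (Ioo (0:ℝ) W).indicator (fun v => ENNReal.ofReal (v ^ (-b) * Real.log (2 * W / v)))
        with hF_def
      have hptw : ∀ w ∈ Ioo (r * Real.sqrt (1 - m ^ 2)) W, Φ (w - w₁) ≤ F (w - w₁) := by
        intro w hw
        by_cases hv : 0 < w - w₁
        · have hmem : w - w₁ ∈ Ioo (0:ℝ) W := ⟨hv, by linarith [hw.2]⟩
          rw [hΦ_pos _ hv, hF_def, indicator_of_mem hmem]
        · rw [hΦ_def]
          simp only [if_neg hv]
          exact (zero_le : (0:ℝ≥0∞) ≤ _)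
      calc (∫⁻ w in Ioo (r * Real.sqrt (1 - m ^ 2)) W, Φ (w - w₁))
          ≤ ∫⁻ w in Ioo (r * Real.sqrt (1 - m ^ 2)) W, F (w - w₁) :=
            my_setLIntegral_mono measurableSet_Ioo hptw
        _ ≤ ∫⁻ w, F (w - w₁) := setLIntegral_le_lintegral _ _
        _ = ∫⁻ v, F v := by
            simp_rw [sub_eq_add_neg]
            exact lintegral_add_right_eq_self F (-w₁)
        _ = C₁ := by rw [hF_def, lintegral_indicator measurableSet_Ioo, hC₁_def]
    calc (∫⁻ θ in Ioo (0:ℝ) (Real.pi / 2), ∫⁻ w in Ioo (r * Real.sqrt (1 - m ^ 2)) W,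
            Φ (w - (1 - m ^ 2) * r * eta m θ))
        ≤ ∫⁻ _ in Ioo (0:ℝ) (Real.pi / 2), C₁ := my_setLIntegral_mono measurableSet_Ioo hwb
      _ = C₁ * volume (Ioo (0:ℝ) (Real.pi / 2)) := setLIntegral_const _ _
      _ = C₁ * ENNReal.ofReal (Real.pi / 2) := by rw [Real.volume_Ioo, sub_zero]
  have step1 : B m t₀ K f h ≤ ∫⁻ r in Ioo (0:ℝ) R,
      (ENNReal.ofReal (h ^ (b / 2) * c₀) * (C₁ * ENNReal.ofReal (Real.pi / 2))) *
        ENNReal.ofReal (r ^ (1 - b) * f r) := by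
    unfold B
    rw [← hW_def, ← hR_def]
    apply my_setLIntegral_mono measurableSet_Ioo
    intro r hr
    refine le_trans (my_setLIntegral_mono measurableSet_Ioo (fun w hw =>
      my_setLIntegral_mono measurableSet_Ioo (fun θ _ => key r hr w hw θ))) ?_
    have e1 : ∀ w : ℝ, (∫⁻ θ in Ioo (0:ℝ) (Real.pi / 2),
          ENNReal.ofReal (h ^ (b / 2) * c₀ * (r ^ (1 - b) * f r)) *
            Φ (w - (1 - m ^ 2) * r * eta m θ))
        = ENNReal.ofReal (h ^ (b / 2) * c₀ * (r ^ (1 - b) * f r)) *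
            ∫⁻ θ in Ioo (0:ℝ) (Real.pi / 2), Φ (w - (1 - m ^ 2) * r * eta m θ) :=
      fun w => lintegral_const_mul' _ _ ENNReal.ofReal_ne_top
    simp only [e1]
    rw [lintegral_const_mul' _ _ ENNReal.ofReal_ne_top]
    refine le_trans (mul_le_mul' le_rfl (swap_bound r hr)) (le_of_eq ?_)
    rw [ENNReal.ofReal_mul (mul_nonneg (Real.rpow_nonneg hh0.le _) hc₀0)]
    ring
  have step2 : (∫⁻ r in Ioo (0:ℝ) R,
      (ENNReal.ofReal (h ^ (b / 2) * c₀) * (C₁ * ENNReal.ofReal (Real.pi / 2))) *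
        ENNReal.ofReal (r ^ (1 - b) * f r))
      = (ENNReal.ofReal (h ^ (b / 2) * c₀) * (C₁ * ENNReal.ofReal (Real.pi / 2))) * C₂ :=
    lintegral_const_mul' _ _ (ENNReal.mul_ne_top ENNReal.ofReal_ne_top
      (ENNReal.mul_ne_top hC₁_top ENNReal.ofReal_ne_top))
  have main : B m t₀ K f h ≤ ENNReal.ofReal (h ^ (b / 2)) * M := by
    refine (step1.trans (le_of_eq step2)).trans (le_of_eq ?_)
    rw [hM_def, ENNReal.ofReal_mul (Real.rpow_nonneg hh0.le _)]
    ring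
  refine main.trans ?_
  rw [ENNReal.ofReal_mul (by positivity : (0:ℝ) ≤ M.toReal + 1),
    mul_comm (ENNReal.ofReal (M.toReal + 1))]
  apply mul_le_mul' le_rfl
  calc M = ENNReal.ofReal M.toReal := (ENNReal.ofReal_toReal hM_top).symm
    _ ≤ ENNReal.ofReal (M.toReal + 1) := ENNReal.ofReal_le_ofReal (by linarith)
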